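/- Pairwise comparison concentration bound (with reference sequence): Let p, q be probability measures on a measurable space 𝒳 with MMD²[p,q] > 0 for a measurable kernel k satisfying 0 ≤ k(x,y) ≤ K. Let m ≥ 2 and let X, Y_k be i.i.d. m-samples from p and Y_1 an i.i.d. m-sample from q, with X, Y_1, Y_k mutually independent. Then P( MMD_u²[X,Y_k] > MMD_u²[X,Y_1] ) ≤ exp( − m · MMD⁴[p,q] / (24K²) ), where MMD⁴[p,q] = (MMD²[p,q])². -/

import Mathlib

open MeasureTheory ProbabilityTheory Filter

noncomputable def mmdSq {𝓧 : Type*} [MeasurableSpace 𝓧]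
    (κ : 𝓧 → 𝓧 → ℝ) (p q : Measure 𝓧) : ℝ :=
  (∫ x, ∫ x', κ x x' ∂p ∂p) - 2 * (∫ x, ∫ y, κ x y ∂q ∂p)
    + (∫ y, ∫ y', κ y y' ∂q ∂q)

noncomputable def mmdU {𝓧 : Type*} (κ : 𝓧 → 𝓧 → ℝ)
    {ι₁ ι₂ : Type*} [Fintype ι₁] [Fintype ι₂] [DecidableEq ι₁] [DecidableEq ι₂]
    (X : ι₁ → 𝓧) (Y : ι₂ → 𝓧) : ℝ :=
  (1 / ((Fintype.card ι₁ : ℝ) * ((Fintype.card ι₁ : ℝ) - 1))) *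
      ∑ i : ι₁, ∑ j ∈ Finset.univ.erase i, κ (X i) (X j)
    + (1 / ((Fintype.card ι₂ : ℝ) * ((Fintype.card ι₂ : ℝ) - 1))) *
      ∑ i : ι₂, ∑ j ∈ Finset.univ.erase i, κ (Y i) (Y j)
    - (2 / ((Fintype.card ι₁ : ℝ) * (Fintype.card ι₂ : ℝ))) *
      ∑ i : ι₁, ∑ j : ι₂, κ (X i) (Y j)

set_option maxHeartbeats 2000000

open Real

lemma hoeff_core {p : ℝ} (hp0 : 0 ≤ p) (hp1 : p ≤ 1) (h : ℝ) :
    1 - p + p * Real.exp h ≤ Real.exp (p * h + h ^ 2 / 8) := by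
  set D : ℝ → ℝ := fun x => 1 - p + p * Real.exp x with hDdef
  have hD : ∀ x, 0 < D x := by
    intro x
    rcases lt_or_eq_of_le hp1 with h1 | h1
    · have : 0 ≤ p * Real.exp x := mul_nonneg hp0 (Real.exp_pos x).le
      simp only [hDdef]; nlinarith
    · have : 0 < p * Real.exp x := by rw [h1]; simpa using Real.exp_pos x
      simp only [hDdef]
      nlinarith
  set F1 : ℝ → ℝ := fun x => p + x / 4 - p * Real.exp x / D x with hF1def
  set G : ℝ → ℝ := fun x => p * x + x ^ 2 / 8 - Real.log (D x) with hGdef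
  have hDd : ∀ x, HasDerivAt D (p * Real.exp x) x := fun x => by
    simpa [hDdef] using ((Real.hasDerivAt_exp x).const_mul p).const_add (1 - p)
  have hG : ∀ x, HasDerivAt G (F1 x) x := by
    intro x
    have h1 : HasDerivAt (fun x : ℝ => p * x + x ^ 2 / 8) (p + x / 4) x := by
      have := ((hasDerivAt_pow 2 x).div_const 8).const_add 0
      have h2 := ((hasDerivAt_id x).const_mul p).add ((hasDerivAt_pow 2 x).div_const 8)
      exact h2.congr_deriv (by push_cast; ring)
    have h2 : HasDerivAt (fun x => Real.log (D x)) (p * Real.exp x / D x) x :=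
      (hDd x).log (hD x).ne'
    exact h1.sub h2
  have hF1 : ∀ x, HasDerivAt F1 (1 / 4 - p * Real.exp x * (1 - p) / (D x) ^ 2) x := by
    intro x
    have hq : HasDerivAt (fun x => p * Real.exp x / D x)
        ((p * Real.exp x * D x - p * Real.exp x * (p * Real.exp x)) / (D x) ^ 2) x :=
      ((Real.hasDerivAt_exp x).const_mul p).div (hDd x) (hD x).ne'
    have h1 := (((hasDerivAt_id x).div_const 4).const_add p).sub hq
    refine h1.congr_deriv ?_
    have hDx := (hD x).ne'
    simp only [hDdef] at hDx ⊢
    field_simp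
    ring
  have hF1nn : ∀ x, 0 ≤ 1 / 4 - p * Real.exp x * (1 - p) / (D x) ^ 2 := by
    intro x
    have hD2 : 0 < (D x) ^ 2 := pow_pos (hD x) 2
    rw [sub_nonneg, div_le_iff₀ hD2]
    have hsq : 0 ≤ ((1 - p) - p * Real.exp x) ^ 2 := sq_nonneg _
    simp only [hDdef]
    nlinarith
  have hF1diff : Differentiable ℝ F1 := fun x => (hF1 x).differentiableAt
  have hF1mono : Monotone F1 :=
    monotone_of_deriv_nonneg hF1diff (fun x => by rw [(hF1 x).deriv]; exact hF1nn x)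
  have hF10 : F1 0 = 0 := by
    simp only [hF1def, hDdef, Real.exp_zero, mul_one]
    have : 1 - p + p = 1 := by ring
    rw [this]
    norm_num
  have hGdiff : Differentiable ℝ G := fun x => (hG x).differentiableAt
  have hGderiv : ∀ x, deriv G x = F1 x := fun x => (hG x).deriv
  have hGmono : MonotoneOn G (Set.Ici 0) := by
    apply monotoneOn_of_deriv_nonneg (convex_Ici 0) hGdiff.continuous.continuousOn
      (hGdiff.differentiableOn)
    intro x hx
    rw [hGderiv x, ← hF10]
    exact hF1mono (le_of_lt (by simpa using hx))
  have hGanti : AntitoneOn G (Set.Iic 0) := by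
    apply antitoneOn_of_deriv_nonpos (convex_Iic 0) hGdiff.continuous.continuousOn
      (hGdiff.differentiableOn)
    intro x hx
    rw [hGderiv x, ← hF10]
    exact hF1mono (le_of_lt (by simpa using hx))
  have hG0 : G 0 = 0 := by
    simp only [hGdef, hDdef, Real.exp_zero, mul_one, mul_zero]
    have : 1 - p + p = 1 := by ring
    rw [this]
    simp
  have hGnn : 0 ≤ G h := by
    rcases le_total 0 h with hh | hh
    · rw [← hG0]; exact hGmono Set.self_mem_Ici hh hh
    · rw [← hG0]; exact hGanti hh Set.self_mem_Iic hh
  have hlog : Real.log (D h) ≤ p * h + h ^ 2 / 8 := by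
    simp only [hGdef] at hGnn; linarith
  calc 1 - p + p * Real.exp h = D h := rfl
    _ ≤ Real.exp (p * h + h ^ 2 / 8) := by
        rw [← Real.exp_log (hD h)]; exact Real.exp_le_exp.mpr hlog

lemma integrable_of_bdd {α : Type*} [MeasurableSpace α] {μ : Measure α} [IsFiniteMeasure μ]
    {f : α → ℝ} (hf : Measurable f) {C : ℝ} (hC : ∀ x, |f x| ≤ C) : Integrable f μ :=
  Integrable.mono' (integrable_const C) hf.aestronglyMeasurable
    (Filter.Eventually.of_forall (fun x => by simpa using hC x))

lemma hoeffding_lemma {α : Type*} [MeasurableSpace α] (μ : Measure α) [IsProbabilityMeasure μ]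
    {g : α → ℝ} (hg : Measurable g) {a b : ℝ} (hab : a ≤ b)
    (hga : ∀ x, a ≤ g x) (hgb : ∀ x, g x ≤ b) :
    ∫ x, Real.exp (g x) ∂μ ≤ Real.exp ((∫ x, g x ∂μ) + (b - a) ^ 2 / 8) := by
  have habs : ∀ x, |g x| ≤ max |a| |b| := fun x =>
    abs_le.mpr ⟨le_trans (neg_le_neg (le_max_left |a| |b|)) (le_trans (neg_abs_le a) (hga x)),
      le_trans (hgb x) (le_trans (le_abs_self b) (le_max_right |a| |b|))⟩
  have Ig : Integrable g μ := integrable_of_bdd hg habs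
  have Ie : Integrable (fun x => Real.exp (g x)) μ := by
    apply integrable_of_bdd (hg.exp)
    intro x
    rw [abs_of_nonneg (Real.exp_pos _).le]
    exact Real.exp_le_exp.mpr (le_trans (hgb x) (le_trans (le_abs_self b) (le_max_right |a| |b|)))
  set m := ∫ x, g x ∂μ with hm
  have hma : a ≤ m := by
    have := integral_mono (integrable_const a) Ig hga
    simpa using this
  have hmb : m ≤ b := by
    have := integral_mono Ig (integrable_const b) hgb
    simpa using this
  rcases eq_or_lt_of_le hab with heq | hlt
  · have hconst : ∀ x, g x = a := fun x => le_antisymm (heq ▸ hgb x) (hga x)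
    have h1 : ∫ x, Real.exp (g x) ∂μ = Real.exp a := by
      rw [show (fun x => Real.exp (g x)) = fun _ => Real.exp a from funext fun x => by
        rw [hconst x]]
      simp
    have h2 : m = a := by
      rw [hm, show g = fun _ => a from funext hconst]; simp
    rw [h1, h2]
    exact Real.exp_le_exp.mpr (by nlinarith [sq_nonneg (b - a)])
  · have hba : 0 < b - a := sub_pos.mpr hlt
    set c1 : ℝ := (b * Real.exp a - a * Real.exp b) / (b - a) with hc1
    set c2 : ℝ := (Real.exp b - Real.exp a) / (b - a) with hc2
    have key : ∀ x, Real.exp (g x) ≤ c1 + c2 * g x := by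
      intro x
      have w1 : (0:ℝ) ≤ (b - g x) / (b - a) := div_nonneg (by linarith [hgb x]) hba.le
      have w2 : (0:ℝ) ≤ (g x - a) / (b - a) := div_nonneg (by linarith [hga x]) hba.le
      have wsum : (b - g x) / (b - a) + (g x - a) / (b - a) = 1 := by
        field_simp
        ring
      have hcx := convexOn_exp.2 (Set.mem_univ a) (Set.mem_univ b) w1 w2 wsum
      simp only [smul_eq_mul] at hcx
      have harg : (b - g x) / (b - a) * a + (g x - a) / (b - a) * b = g x := by
        field_simp
        ring
      rw [harg] at hcx
      refine le_trans hcx (le_of_eq ?_)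
      simp only [hc1, hc2]
      field_simp
      ring
    have hint : ∫ x, Real.exp (g x) ∂μ ≤ c1 + c2 * m := by
      have h := integral_mono Ie ((integrable_const c1).add (Ig.const_mul c2)) key
      refine le_trans h (le_of_eq ?_)
      simp only [Pi.add_apply]
      rw [integral_add (integrable_const c1) (Ig.const_mul c2), integral_const_mul]
      simp
      exact Or.inl hm.symm
    set p : ℝ := (m - a) / (b - a) with hp
    have hp0 : 0 ≤ p := div_nonneg (by linarith) hba.le
    have hp1 : p ≤ 1 := (div_le_one hba).mpr (by linarith)
    have hre : c1 + c2 * m = Real.exp a * (1 - p + p * Real.exp (b - a)) := by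
      have hexpb : Real.exp b = Real.exp a * Real.exp (b - a) := by
        rw [← Real.exp_add]; congr 1; ring
      simp only [hc1, hc2, hp, hexpb]
      field_simp
      ring
    have hcore := hoeff_core hp0 hp1 (b - a)
    have hfin : Real.exp a * (1 - p + p * Real.exp (b - a))
        ≤ Real.exp a * Real.exp (p * (b - a) + (b - a) ^ 2 / 8) :=
      mul_le_mul_of_nonneg_left hcore (Real.exp_pos a).le
    have harg2 : a + (p * (b - a) + (b - a) ^ 2 / 8) = m + (b - a) ^ 2 / 8 := by
      have : p * (b - a) = m - a := by rw [hp]; field_simp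
      rw [this]; ring
    calc ∫ x, Real.exp (g x) ∂μ ≤ c1 + c2 * m := hint
      _ = Real.exp a * (1 - p + p * Real.exp (b - a)) := hre
      _ ≤ Real.exp a * Real.exp (p * (b - a) + (b - a) ^ 2 / 8) := hfin
      _ = Real.exp (m + (b - a) ^ 2 / 8) := by rw [← Real.exp_add, harg2]

lemma insertNth_update' {n : ℕ} {𝒳 : Type*} (i : Fin (n+1)) (v : 𝒳) (y : Fin n → 𝒳)
    (j : Fin n) (w : 𝒳) :
    (i.insertNth v (Function.update y j w) : Fin (n+1) → 𝒳)
      = Function.update (i.insertNth v y : Fin (n+1) → 𝒳) (i.succAbove j) w := by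
  funext k
  rcases eq_or_ne k (i.succAbove j) with rfl | hk
  · simp [Fin.insertNth_apply_succAbove]
  · rw [Function.update_of_ne hk]
    rcases eq_or_ne k i with rfl | hki
    · simp [Function.update_of_ne (Fin.succAbove_ne k j).symm]
    · obtain ⟨j', rfl⟩ := Fin.exists_succAbove_eq hki
      have hjj : j' ≠ j := fun h => hk (by rw [h])
      simp [Fin.insertNth_apply_succAbove, Function.update_of_ne hjj]

lemma insertNth_pivot {n : ℕ} {𝒳 : Type*} (i : Fin (n+1)) (v v' : 𝒳) (y : Fin n → 𝒳) :
    (i.insertNth v' y : Fin (n+1) → 𝒳)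
      = Function.update (i.insertNth v y : Fin (n+1) → 𝒳) i v' := by
  funext k
  rcases eq_or_ne k i with rfl | hk
  · simp
  · obtain ⟨j, rfl⟩ := Fin.exists_succAbove_eq hk
    simp [Function.update_of_ne (Fin.succAbove_ne i j), Fin.insertNth_apply_succAbove]

lemma mcdiarmid_pi {𝒳 : Type*} [MeasurableSpace 𝒳] :
    ∀ {n : ℕ} (μ : Fin n → Measure 𝒳), (∀ i, IsProbabilityMeasure (μ i)) →
    ∀ (f : (Fin n → 𝒳) → ℝ), Measurable f → ∀ (M : ℝ), (∀ x, |f x| ≤ M) →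
    ∀ (c : Fin n → ℝ), (∀ x i v, f x - f (Function.update x i v) ≤ c i) →
    ∫ x, Real.exp (f x) ∂(Measure.pi μ)
      ≤ Real.exp ((∫ x, f x ∂(Measure.pi μ)) + (∑ i, (c i)^2) / 8) := by
  intro n
  induction n with
  | zero =>
    intro μ hμ f hf M hM c hc
    haveI : ∀ i, IsProbabilityMeasure (μ i) := hμ
    have hconst : ∀ x : Fin 0 → 𝒳, f x = f (fun i => i.elim0) :=
      fun x => congrArg f (funext fun i => i.elim0)
    have h1 : ∫ x, Real.exp (f x) ∂(Measure.pi μ) = Real.exp (f (fun i => i.elim0)) := by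
      rw [show (fun x => Real.exp (f x)) = fun _ => Real.exp (f (fun i => i.elim0)) from
        funext fun x => by rw [hconst x]]
      simp
    have h2 : ∫ x, f x ∂(Measure.pi μ) = f (fun i => i.elim0) := by
      rw [show f = fun _ => f (fun i => i.elim0) from funext hconst]
      simp
    rw [h1, h2]
    simp
  | succ n ih =>
    intro μ hμ f hf M hM c hc
    haveI : ∀ i, IsProbabilityMeasure (μ i) := hμ
    have hNE : Nonempty 𝒳 := by
      by_contra h
      rw [not_nonempty_iff] at h
      have h1 := measure_univ (μ := μ 0)
      rw [Set.univ_eq_empty_iff.mpr h] at h1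
      simp at h1
    obtain ⟨v₀⟩ := hNE
    have hc0nn : ∀ i, 0 ≤ c i := by
      intro i
      have h1 := hc (fun _ => v₀) i v₀
      rw [show Function.update (fun _ : Fin (n+1) => v₀) i v₀ = fun _ => v₀ from
        Function.update_eq_self i _] at h1
      simpa using h1
    set μ' : Fin n → Measure 𝒳 := fun j => μ ((0 : Fin (n+1)).succAbove j) with hμ'
    haveI : ∀ j, IsProbabilityMeasure (μ' j) := fun j => hμ _
    set π' := Measure.pi μ' with hπ'
    set e := MeasurableEquiv.piFinSuccAbove (fun _ : Fin (n+1) => 𝒳) 0 with he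
    have hmp : MeasurePreserving e (Measure.pi μ) ((μ 0).prod π') :=
      measurePreserving_piFinSuccAbove μ 0
    set F : 𝒳 × (Fin n → 𝒳) → ℝ := fun z => f (Fin.insertNth 0 z.1 z.2) with hF
    have hsymm : ∀ z : 𝒳 × (Fin n → 𝒳), e.symm z = Fin.insertNth 0 z.1 z.2 := by
      intro z
      simp [he, MeasurableEquiv.piFinSuccAbove_symm_apply, Fin.insertNthEquiv]
    have hFmeas : Measurable F := by
      have h1 : F = f ∘ e.symm := funext fun z => by
        rw [hF]; simp only [Function.comp_apply, hsymm z]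
      rw [h1]
      exact hf.comp e.symm.measurable
    have htrans : ∀ (g : (Fin (n+1) → 𝒳) → ℝ), Measurable g →
        ∫ x, g x ∂(Measure.pi μ) = ∫ z, g (Fin.insertNth 0 z.1 z.2) ∂((μ 0).prod π') := by
      intro g hg
      have h1 := hmp.integral_comp e.measurableEmbedding
        (fun z => g (Fin.insertNth 0 z.1 z.2))
      rw [← h1]
      congr 1
      funext x
      congr 1
      have : e x = (x 0, fun j => x ((0 : Fin (n+1)).succAbove j)) := rfl
      rw [this]
      exact (Fin.insertNth_self_removeNth 0 x).symm
    have hIF : Integrable F ((μ 0).prod π') := integrable_of_bdd hFmeas (fun z => hM _)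
    have hIexpF : Integrable (fun z => Real.exp (F z)) ((μ 0).prod π') := by
      apply integrable_of_bdd hFmeas.exp (C := Real.exp M)
      intro z
      rw [abs_of_nonneg (Real.exp_pos _).le]
      exact Real.exp_le_exp.mpr (le_trans (le_abs_self _) (hM _))
    set g : 𝒳 → ℝ := fun v => ∫ y, F (v, y) ∂π' with hg
    have hgmeas : Measurable g := hFmeas.stronglyMeasurable.integral_prod_right'.measurable
    have hgM : ∀ v, |g v| ≤ M := by
      intro v
      have h1 : ‖∫ y, F (v, y) ∂π'‖ ≤ M * (π' Set.univ).toReal :=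
        norm_integral_le_of_norm_le_const (Filter.Eventually.of_forall fun y => by
          rw [Real.norm_eq_abs]; exact hM _)
      simpa using h1
    set S' : ℝ := ∑ j : Fin n, (c ((0 : Fin (n+1)).succAbove j))^2 with hS'
    have Hin : ∀ v, ∫ y, Real.exp (F (v, y)) ∂π' ≤ Real.exp (g v + S' / 8) := by
      intro v
      refine ih μ' (fun j => hμ _) (fun y => F (v, y))
        (hFmeas.comp measurable_prodMk_left) M (fun y => hM _)
        (fun j => c ((0 : Fin (n+1)).succAbove j)) ?_
      intro y j w
      have h1 : (Fin.insertNth (0 : Fin (n+1)) v (Function.update y j w) : Fin (n+1) → 𝒳)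
          = Function.update (Fin.insertNth 0 v y : Fin (n+1) → 𝒳)
              ((0 : Fin (n+1)).succAbove j) w := insertNth_update' 0 v y j w
      simp only [hF]
      rw [h1]
      exact hc _ _ _
    have hgdiff : ∀ v v', g v - g v' ≤ c 0 := by
      intro v v'
      have hptw : ∀ y, F (v, y) - F (v', y) ≤ c 0 := by
        intro y
        have h1 : (Fin.insertNth (0 : Fin (n+1)) v' y : Fin (n+1) → 𝒳)
            = Function.update (Fin.insertNth 0 v y : Fin (n+1) → 𝒳) 0 v' :=
          insertNth_pivot 0 v v' y
        simp only [hF]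
        rw [h1]
        exact hc _ _ _
      have hIv : Integrable (fun y => F (v, y)) π' :=
        integrable_of_bdd (hFmeas.comp measurable_prodMk_left) (fun y => hM _)
      have hIv' : Integrable (fun y => F (v', y)) π' :=
        integrable_of_bdd (hFmeas.comp measurable_prodMk_left) (fun y => hM _)
      have h2 : g v - g v' = ∫ y, (F (v, y) - F (v', y)) ∂π' := by
        rw [hg]; rw [integral_sub hIv hIv']
      rw [h2]
      have h3 := integral_mono (hIv.sub hIv') (integrable_const (c 0)) hptw
      simpa using h3
    have hbdd : BddBelow (Set.range g) := by
      refine ⟨-M, ?_⟩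
      rintro r ⟨v, rfl⟩
      exact (abs_le.mp (hgM v)).1
    set a : ℝ := sInf (Set.range g) with ha
    have ha_le : ∀ v, a ≤ g v := fun v => csInf_le hbdd ⟨v, rfl⟩
    have hle_a : ∀ v, g v ≤ a + c 0 := by
      intro v
      have h1 : g v - c 0 ≤ a := by
        refine le_csInf ⟨g v₀, ⟨v₀, rfl⟩⟩ ?_
        rintro r ⟨v', rfl⟩
        linarith [hgdiff v v']
      linarith
    have hhoef := hoeffding_lemma (μ 0) hgmeas (a := a) (b := a + c 0)
      (by linarith [hc0nn 0]) ha_le hle_a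
    have hIg0 : ∫ v, g v ∂(μ 0) = ∫ x, f x ∂(Measure.pi μ) := by
      rw [htrans f hf]
      exact (integral_prod F hIF).symm
    -- main chain
    have step1 : ∫ x, Real.exp (f x) ∂(Measure.pi μ)
        = ∫ v, (∫ y, Real.exp (F (v, y)) ∂π') ∂(μ 0) := by
      rw [htrans (fun x => Real.exp (f x)) hf.exp]
      exact integral_prod _ hIexpF
    have step2 : ∫ v, (∫ y, Real.exp (F (v, y)) ∂π') ∂(μ 0)
        ≤ ∫ v, Real.exp (g v + S' / 8) ∂(μ 0) := by
      apply integral_mono ?_ ?_ Hin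
      · apply integrable_of_bdd (hFmeas.exp.stronglyMeasurable.integral_prod_right'.measurable) (C := Real.exp M)
        intro v
        have h1 : ‖∫ y, Real.exp (F (v, y)) ∂π'‖ ≤ Real.exp M * (π' Set.univ).toReal :=
          norm_integral_le_of_norm_le_const (Filter.Eventually.of_forall fun y => by
            rw [Real.norm_eq_abs, abs_of_nonneg (Real.exp_pos _).le]
            exact Real.exp_le_exp.mpr (le_trans (le_abs_self _) (hM _)))
        simpa using h1
      · apply integrable_of_bdd (hgmeas.add_const (S' / 8)).exp (C := Real.exp (M + S' / 8))
        intro v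
        rw [abs_of_nonneg (Real.exp_pos _).le]
        exact Real.exp_le_exp.mpr (by linarith [(abs_le.mp (hgM v)).2])
    have step3 : ∫ v, Real.exp (g v + S' / 8) ∂(μ 0)
        = Real.exp (S' / 8) * ∫ v, Real.exp (g v) ∂(μ 0) := by
      simp_rw [Real.exp_add]
      rw [integral_mul_const]
      ring
    have step4 : Real.exp (S' / 8) * ∫ v, Real.exp (g v) ∂(μ 0)
        ≤ Real.exp (S' / 8) * Real.exp ((∫ v, g v ∂(μ 0)) + (a + c 0 - a)^2 / 8) :=
      mul_le_mul_of_nonneg_left hhoef (Real.exp_pos _).le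
    have hsum : ∑ i : Fin (n+1), (c i)^2 = (c 0)^2 + S' := by
      rw [hS']
      exact Fin.sum_univ_succAbove (fun i => (c i)^2) 0
    calc ∫ x, Real.exp (f x) ∂(Measure.pi μ)
        ≤ Real.exp (S' / 8) * Real.exp ((∫ v, g v ∂(μ 0)) + (a + c 0 - a)^2 / 8) := by
          rw [step1]; exact le_trans step2 (le_of_eq step3 |>.trans step4)
      _ = Real.exp ((∫ x, f x ∂(Measure.pi μ)) + (∑ i : Fin (n+1), (c i)^2) / 8) := by
          rw [← Real.exp_add, hIg0, hsum]
          congr 1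
          ring

section Marginals
variable {𝒳 : Type*} [MeasurableSpace 𝒳] {m : ℕ}

lemma pi_map_eval (μ : Fin m → Measure 𝒳) [∀ i, IsProbabilityMeasure (μ i)] (i : Fin m) :
    (Measure.pi μ).map (Function.eval i) = μ i := by
  ext s hs
  rw [Measure.map_apply (measurable_pi_apply i) hs]
  have hpre : Function.eval i ⁻¹' s
      = Set.pi Set.univ (Function.update (fun _ : Fin m => (Set.univ : Set 𝒳)) i s) := by
    ext x
    simp only [Set.mem_preimage, Set.mem_univ_pi]
    constructor
    · intro hx j
      rcases eq_or_ne j i with rfl | hj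
      · simpa using hx
      · simp [Function.update_of_ne hj]
    · intro hx
      have := hx i
      simpa using this
  rw [hpre, Measure.pi_pi]
  rw [Fintype.prod_eq_single i (fun j hj => by simp [Function.update_of_ne hj])]
  simp

lemma int_eval (μ : Fin m → Measure 𝒳) [∀ i, IsProbabilityMeasure (μ i)] (i : Fin m)
    (h : 𝒳 → ℝ) (hh : Measurable h) :
    ∫ x, h (x i) ∂(Measure.pi μ) = ∫ u, h u ∂(μ i) := by
  rw [← pi_map_eval μ i,
    integral_map (measurable_pi_apply i).aemeasurable hh.aestronglyMeasurable]

lemma pi_map_pair (μ : Fin m → Measure 𝒳) [∀ i, IsProbabilityMeasure (μ i)] {i j : Fin m}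
    (hij : i ≠ j) :
    (Measure.pi μ).map (fun x => (x i, x j)) = (μ i).prod (μ j) := by
  refine (Measure.prod_eq fun s t hs ht => ?_).symm
  rw [Measure.map_apply ((measurable_pi_apply i).prodMk (measurable_pi_apply j)) (hs.prod ht)]
  have hpre : (fun x : Fin m → 𝒳 => (x i, x j)) ⁻¹' (s ×ˢ t)
      = Set.pi Set.univ (Function.update (Function.update (fun _ => Set.univ) i s) j t) := by
    ext x
    simp only [Set.mem_preimage, Set.mem_prod, Set.mem_univ_pi]
    constructor
    · intro hx k
      rcases eq_or_ne k j with rfl | hkj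
      · simpa [Function.update_self] using hx.2
      · rcases eq_or_ne k i with rfl | hki
        · simpa [Function.update_of_ne hkj, Function.update_self] using hx.1
        · simp [Function.update_of_ne hkj, Function.update_of_ne hki]
    · intro hx
      have h1 := hx i
      have h2 := hx j
      rw [Function.update_self] at h2
      rw [Function.update_of_ne hij, Function.update_self] at h1
      exact ⟨h1, h2⟩
  rw [hpre, Measure.pi_pi]
  have hprod : ∏ k, (μ k) (Function.update (Function.update (fun _ => Set.univ) i s) j t k)
      = ∏ k ∈ ({i, j} : Finset (Fin m)), (μ k)
          (Function.update (Function.update (fun _ => Set.univ) i s) j t k) := by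
    symm
    apply Finset.prod_subset (Finset.subset_univ _)
    intro k _ hk
    simp only [Finset.mem_insert, Finset.mem_singleton, not_or] at hk
    simp [Function.update_of_ne hk.2, Function.update_of_ne hk.1]
  rw [hprod, Finset.prod_pair hij]
  rw [Function.update_of_ne hij, Function.update_self, Function.update_self]

lemma int_pair (μ : Fin m → Measure 𝒳) [∀ i, IsProbabilityMeasure (μ i)] {i j : Fin m}
    (hij : i ≠ j) (κ : 𝒳 → 𝒳 → ℝ) (hκ : Measurable (Function.uncurry κ))
    {K : ℝ} (hbd : ∀ x y, |κ x y| ≤ K) :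
    ∫ x, κ (x i) (x j) ∂(Measure.pi μ) = ∫ u, ∫ w, κ u w ∂(μ j) ∂(μ i) := by
  have h1 : ∫ x, κ (x i) (x j) ∂(Measure.pi μ)
      = ∫ z : 𝒳 × 𝒳, κ z.1 z.2 ∂((μ i).prod (μ j)) := by
    rw [← pi_map_pair μ hij,
      integral_map (((measurable_pi_apply i).prodMk (measurable_pi_apply j))).aemeasurable
        hκ.aestronglyMeasurable]
  rw [h1]
  exact integral_prod _ (integrable_of_bdd hκ (fun z => hbd z.1 z.2))

lemma int_snd {α β : Type*} [MeasurableSpace α] [MeasurableSpace β]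
    (μ : Measure α) (ν : Measure β) [IsProbabilityMeasure μ] [IsProbabilityMeasure ν]
    (g : β → ℝ) (hg : Measurable g) {M : ℝ} (hM : ∀ y, |g y| ≤ M) :
    ∫ z, g z.2 ∂(μ.prod ν) = ∫ y, g y ∂ν := by
  have hInt : Integrable (fun z : α × β => g z.2) (μ.prod ν) :=
    integrable_of_bdd (hg.comp measurable_snd) (fun z => hM z.2)
  rw [integral_prod _ hInt]
  simp

lemma int_fst {α β : Type*} [MeasurableSpace α] [MeasurableSpace β]
    (μ : Measure α) (ν : Measure β) [IsProbabilityMeasure μ] [IsProbabilityMeasure ν]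
    (g : α → ℝ) (hg : Measurable g) {M : ℝ} (hM : ∀ y, |g y| ≤ M) :
    ∫ z, g z.1 ∂(μ.prod ν) = ∫ x, g x ∂μ := by
  have hInt : Integrable (fun z : α × β => g z.1) (μ.prod ν) :=
    integrable_of_bdd (hg.comp measurable_fst) (fun z => hM z.1)
  rw [integral_prod _ hInt]
  simp

end Marginals

lemma prod_exp_step {α β : Type*} [MeasurableSpace α] [MeasurableSpace β]
    (μ : Measure α) (ν : Measure β) [IsProbabilityMeasure μ] [IsProbabilityMeasure ν]
    (f : α × β → ℝ) (hf : Measurable f) {M : ℝ} (hM : ∀ w, |f w| ≤ M)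
    {D : ℝ} (hD0 : 0 ≤ D)
    (hD : ∀ a, ∫ b, Real.exp (f (a, b)) ∂ν ≤ Real.exp ((∫ b, f (a, b) ∂ν) + D)) :
    ∫ w, Real.exp (f w) ∂(μ.prod ν)
      ≤ Real.exp D * ∫ a, Real.exp (∫ b, f (a, b) ∂ν) ∂μ := by
  have hIexp : Integrable (fun w => Real.exp (f w)) (μ.prod ν) := by
    apply integrable_of_bdd hf.exp (C := Real.exp M)
    intro w
    rw [abs_of_nonneg (Real.exp_pos _).le]
    exact Real.exp_le_exp.mpr (le_trans (le_abs_self _) (hM _))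
  have hg : Measurable (fun a => ∫ b, f (a, b) ∂ν) :=
    hf.stronglyMeasurable.integral_prod_right'.measurable
  have hgM : ∀ a, |∫ b, f (a, b) ∂ν| ≤ M := by
    intro a
    have h1 : ‖∫ b, f (a, b) ∂ν‖ ≤ M * (ν Set.univ).toReal :=
      norm_integral_le_of_norm_le_const (Filter.Eventually.of_forall fun b => by
        rw [Real.norm_eq_abs]; exact hM _)
    simpa using h1
  rw [integral_prod _ hIexp]
  have step : ∫ a, (∫ b, Real.exp (f (a, b)) ∂ν) ∂μ
      ≤ ∫ a, Real.exp ((∫ b, f (a, b) ∂ν) + D) ∂μ := by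
    apply integral_mono ?_ ?_ hD
    · apply integrable_of_bdd (hf.exp.stronglyMeasurable.integral_prod_right'.measurable)
        (C := Real.exp M)
      intro a
      have h1 : ‖∫ b, Real.exp (f (a, b)) ∂ν‖ ≤ Real.exp M * (ν Set.univ).toReal :=
        norm_integral_le_of_norm_le_const (Filter.Eventually.of_forall fun b => by
          rw [Real.norm_eq_abs, abs_of_nonneg (Real.exp_pos _).le]
          exact Real.exp_le_exp.mpr (le_trans (le_abs_self _) (hM _)))
      simpa using h1
    · apply integrable_of_bdd (hg.add_const D).exp (C := Real.exp (M + D))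
      intro a
      rw [abs_of_nonneg (Real.exp_pos _).le]
      exact Real.exp_le_exp.mpr (by linarith [(abs_le.mp (hgM a)).2])
  refine le_trans step (le_of_eq ?_)
  simp_rw [Real.exp_add]
  rw [integral_mul_const]
  ring

section App
variable {𝓧 : Type*}

noncomputable def S2 (κ : 𝓧 → 𝓧 → ℝ) {m : ℕ} (x : Fin m → 𝓧) : ℝ :=
  ∑ i, ∑ j ∈ Finset.univ.erase i, κ (x i) (x j)

noncomputable def S3 (κ : 𝓧 → 𝓧 → ℝ) {m : ℕ} (x y : Fin m → 𝓧) : ℝ :=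
  ∑ i, ∑ j, κ (x i) (y j)

variable {κ : 𝓧 → 𝓧 → ℝ} {K : ℝ} {m : ℕ}

lemma habsK (hb : ∀ x y, 0 ≤ κ x y ∧ κ x y ≤ K) (u v u' v' : 𝓧) :
    |κ u v - κ u' v'| ≤ K := by
  rw [abs_le]
  constructor <;> linarith [(hb u v).1, (hb u v).2, (hb u' v').1, (hb u' v').2]

lemma hK0 (hb : ∀ x y : 𝓧, 0 ≤ κ x y ∧ κ x y ≤ K) (u : 𝓧) : 0 ≤ K :=
  le_trans (hb u u).1 (hb u u).2

lemma sum_abs_le_card {ι : Type*} (s : Finset ι) (f : ι → ℝ) {C : ℝ}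
    (hC : ∀ j ∈ s, |f j| ≤ C) : |∑ j ∈ s, f j| ≤ s.card * C := by
  refine (Finset.abs_sum_le_sum_abs f s).trans ?_
  have := Finset.sum_le_card_nsmul s (fun j => |f j|) C hC
  simpa [nsmul_eq_mul] using this

lemma S3_bound (hb : ∀ x y, 0 ≤ κ x y ∧ κ x y ≤ K) (x y : Fin m → 𝓧) :
    |S3 κ x y| ≤ m * (m * K) := by
  have h1 : ∀ i ∈ Finset.univ, |∑ j, κ (x i) (y j)| ≤ m * K := by
    intro i _
    have := sum_abs_le_card Finset.univ (fun j => κ (x i) (y j))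
      (fun j _ => by rw [abs_of_nonneg (hb _ _).1]; exact (hb _ _).2)
    simpa using this
  have := sum_abs_le_card Finset.univ (fun i => ∑ j, κ (x i) (y j)) h1
  simpa [S3] using this

lemma S2_bound (hb : ∀ x y, 0 ≤ κ x y ∧ κ x y ≤ K) (x : Fin m → 𝓧) (hK : 0 ≤ K) :
    |S2 κ x| ≤ m * (m * K) := by
  have h1 : ∀ i ∈ Finset.univ, |∑ j ∈ Finset.univ.erase i, κ (x i) (x j)| ≤ m * K := by
    intro i _
    have h2 := sum_abs_le_card (Finset.univ.erase i) (fun j => κ (x i) (x j))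
      (fun j _ => by rw [abs_of_nonneg (hb _ _).1]; exact (hb _ _).2)
    refine h2.trans ?_
    have hcard : ((Finset.univ.erase i).card : ℝ) ≤ m := by
      have := Finset.card_erase_le (s := (Finset.univ : Finset (Fin m))) (a := i)
      have h3 : ((Finset.univ.erase i).card : ℝ) ≤ (Finset.univ : Finset (Fin m)).card := by
        exact_mod_cast this
      simpa using h3
    nlinarith
  have := sum_abs_le_card Finset.univ (fun i => ∑ j ∈ Finset.univ.erase i, κ (x i) (x j)) h1
  simpa [S2] using this

lemma S3_diff_left (hb : ∀ x y, 0 ≤ κ x y ∧ κ x y ≤ K) (x y : Fin m → 𝓧) (i : Fin m) (v : 𝓧) :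
    |S3 κ (Function.update x i v) y - S3 κ x y| ≤ m * K := by
  have h1 : S3 κ (Function.update x i v) y - S3 κ x y
      = ∑ i', ((∑ j, κ (Function.update x i v i') (y j)) - ∑ j, κ (x i') (y j)) := by
    rw [Finset.sum_sub_distrib]
    rfl
  rw [h1, Fintype.sum_eq_single i (fun i' hi' => by rw [Function.update_of_ne hi', sub_self]),
    Function.update_self, ← Finset.sum_sub_distrib]
  have := sum_abs_le_card Finset.univ (fun j => κ v (y j) - κ (x i) (y j))
    (fun j _ => habsK hb _ _ _ _)
  simpa using this

lemma S3_diff_right (hb : ∀ x y, 0 ≤ κ x y ∧ κ x y ≤ K) (x y : Fin m → 𝓧) (i : Fin m) (v : 𝓧) :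
    |S3 κ x (Function.update y i v) - S3 κ x y| ≤ m * K := by
  have hcomm : ∀ y' : Fin m → 𝓧, S3 κ x y' = ∑ j, ∑ i', κ (x i') (y' j) := by
    intro y'
    rw [S3, Finset.sum_comm]
  rw [hcomm, hcomm]
  have h1 : (∑ j, ∑ i', κ (x i') (Function.update y i v j)) - ∑ j, ∑ i', κ (x i') (y j)
      = ∑ j, ((∑ i', κ (x i') (Function.update y i v j)) - ∑ i', κ (x i') (y j)) := by
    rw [Finset.sum_sub_distrib]
  rw [h1, Fintype.sum_eq_single i (fun j hj => by rw [Function.update_of_ne hj, sub_self]),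
    Function.update_self, ← Finset.sum_sub_distrib]
  have := sum_abs_le_card Finset.univ (fun i' => κ (x i') v - κ (x i') (y i))
    (fun i' _ => habsK hb _ _ _ _)
  simpa using this

lemma S2_diff (hb : ∀ x y, 0 ≤ κ x y ∧ κ x y ≤ K) (x : Fin m → 𝓧) (i : Fin m) (v : 𝓧)
    (hK : 0 ≤ K) :
    |S2 κ (Function.update x i v) - S2 κ x| ≤ 2 * ((m : ℝ) - 1) * K := by
  classical
  set x' := Function.update x i v with hx'
  set δ : Fin m → Fin m → ℝ := fun i' j => κ (x' i') (x' j) - κ (x i') (x j) with hδ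
  have hδ0 : ∀ i' j, i' ≠ i → j ≠ i → δ i' j = 0 := by
    intro i' j h1 h2
    simp [hδ, hx', Function.update_of_ne h1, Function.update_of_ne h2]
  have hδK : ∀ i' j, |δ i' j| ≤ K := fun i' j => habsK hb _ _ _ _
  have h1 : S2 κ x' - S2 κ x = ∑ i', ∑ j ∈ Finset.univ.erase i', δ i' j := by
    simp only [S2, hδ, Finset.sum_sub_distrib]
  rw [h1]
  have hcard : ∀ i' : Fin m, ((Finset.univ.erase i').card : ℝ) = (m : ℝ) - 1 := by
    intro i'
    rw [Finset.card_erase_of_mem (Finset.mem_univ i')]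
    simp
    rw [Nat.cast_sub]
    · simp
    · exact Nat.one_le_iff_ne_zero.mpr (by rintro rfl; exact absurd i'.2 (by simp))
  have hm1 : (0:ℝ) ≤ (m:ℝ) - 1 := by
    have : (1:ℝ) ≤ m := by
      have : 0 < m := by
        rcases Nat.eq_zero_or_pos m with rfl | h
        · exact absurd i.2 (by simp)
        · exact h
      exact_mod_cast this
    linarith
  have hBi : |∑ j ∈ Finset.univ.erase i, δ i j| ≤ ((m : ℝ) - 1) * K := by
    have := sum_abs_le_card (Finset.univ.erase i) (δ i) (fun j _ => hδK i j)
    rwa [hcard i] at this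
  have hBother : ∀ i' ∈ Finset.univ.erase i, |∑ j ∈ Finset.univ.erase i', δ i' j| ≤ K := by
    intro i' hi'
    have hi'ne : i' ≠ i := Finset.ne_of_mem_erase hi'
    have hmem : i ∈ Finset.univ.erase i' := Finset.mem_erase.mpr ⟨fun h => hi'ne h.symm, Finset.mem_univ i⟩
    rw [Finset.sum_eq_single_of_mem i hmem (fun j hj hji => hδ0 i' j hi'ne hji)]
    exact hδK i' i
  calc |∑ i', ∑ j ∈ Finset.univ.erase i', δ i' j|
      ≤ |∑ j ∈ Finset.univ.erase i, δ i j|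
        + |∑ i' ∈ Finset.univ.erase i, ∑ j ∈ Finset.univ.erase i', δ i' j| := by
        rw [← Finset.add_sum_erase Finset.univ _ (Finset.mem_univ i)]
        exact abs_add_le _ _
    _ ≤ ((m : ℝ) - 1) * K + ((m : ℝ) - 1) * K := by
        have h2 := sum_abs_le_card (Finset.univ.erase i)
          (fun i' => ∑ j ∈ Finset.univ.erase i', δ i' j) hBother
        rw [hcard i] at h2
        have h3 : |∑ i' ∈ Finset.univ.erase i, ∑ j ∈ Finset.univ.erase i', δ i' j|
            ≤ ((m:ℝ) - 1) * K := by simpa using h2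
        linarith [hBi]
    _ = 2 * ((m : ℝ) - 1) * K := by ring

end App

section IntW
variable {𝓧 : Type*} [MeasurableSpace 𝓧] {m : ℕ}
variable (μ1 μ2 μ3 : Measure 𝓧) [IsProbabilityMeasure μ1] [IsProbabilityMeasure μ2]
  [IsProbabilityMeasure μ3]
variable {φ : 𝓧 → 𝓧 → ℝ} {C : ℝ}

lemma intW_33 (hφ : Measurable (Function.uncurry φ)) (hC : ∀ x y, |φ x y| ≤ C)
    {i j : Fin m} (hij : i ≠ j) :
    ∫ w, φ (w.2.2 i) (w.2.2 j) ∂((Measure.pi (fun _ : Fin m => μ1)).prod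
      ((Measure.pi (fun _ : Fin m => μ2)).prod (Measure.pi (fun _ : Fin m => μ3))))
      = ∫ u, ∫ v, φ u v ∂μ3 ∂μ3 := by
  have hg : Measurable (fun c : Fin m → 𝓧 => φ (c i) (c j)) := by
    have hp : Measurable (fun c : Fin m → 𝓧 => ((c i, c j) : 𝓧 × 𝓧)) :=
      (measurable_pi_apply i).prodMk (measurable_pi_apply j)
    exact hφ.comp hp
  have h1 := int_snd (Measure.pi (fun _ : Fin m => μ1))
    ((Measure.pi (fun _ : Fin m => μ2)).prod (Measure.pi (fun _ : Fin m => μ3)))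
    (fun z : (Fin m → 𝓧) × (Fin m → 𝓧) => φ (z.2 i) (z.2 j))
    (hg.comp measurable_snd) (M := C) (fun z => hC _ _)
  rw [h1, int_snd _ _ _ hg (M := C) (fun z => hC _ _),
    int_pair _ hij φ hφ (fun x y => hC x y)]

lemma intW_22 (hφ : Measurable (Function.uncurry φ)) (hC : ∀ x y, |φ x y| ≤ C)
    {i j : Fin m} (hij : i ≠ j) :
    ∫ w, φ (w.2.1 i) (w.2.1 j) ∂((Measure.pi (fun _ : Fin m => μ1)).prod
      ((Measure.pi (fun _ : Fin m => μ2)).prod (Measure.pi (fun _ : Fin m => μ3))))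
      = ∫ u, ∫ v, φ u v ∂μ2 ∂μ2 := by
  have hg : Measurable (fun c : Fin m → 𝓧 => φ (c i) (c j)) := by
    have hp : Measurable (fun c : Fin m → 𝓧 => ((c i, c j) : 𝓧 × 𝓧)) :=
      (measurable_pi_apply i).prodMk (measurable_pi_apply j)
    exact hφ.comp hp
  have h1 := int_snd (Measure.pi (fun _ : Fin m => μ1))
    ((Measure.pi (fun _ : Fin m => μ2)).prod (Measure.pi (fun _ : Fin m => μ3)))
    (fun z : (Fin m → 𝓧) × (Fin m → 𝓧) => φ (z.1 i) (z.1 j))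
    (hg.comp measurable_fst) (M := C) (fun z => hC _ _)
  rw [h1, int_fst _ _ _ hg (M := C) (fun z => hC _ _),
    int_pair _ hij φ hφ (fun x y => hC x y)]

lemma intW_13 (hφ : Measurable (Function.uncurry φ)) (hC : ∀ x y, |φ x y| ≤ C) (i j : Fin m) :
    ∫ w, φ (w.1 i) (w.2.2 j) ∂((Measure.pi (fun _ : Fin m => μ1)).prod
      ((Measure.pi (fun _ : Fin m => μ2)).prod (Measure.pi (fun _ : Fin m => μ3))))
      = ∫ u, ∫ v, φ u v ∂μ3 ∂μ1 := by
  have hG : Measurable (fun u => ∫ v, φ u v ∂μ3) :=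
    hφ.stronglyMeasurable.integral_prod_right'.measurable
  have hGC : ∀ u, |∫ v, φ u v ∂μ3| ≤ C := by
    intro u
    have h1 : ‖∫ v, φ u v ∂μ3‖ ≤ C * (μ3 Set.univ).toReal :=
      norm_integral_le_of_norm_le_const (Filter.Eventually.of_forall fun v => by
        rw [Real.norm_eq_abs]; exact hC _ _)
    simpa using h1
  have hmeas : Measurable
      (fun w : (Fin m → 𝓧) × (Fin m → 𝓧) × (Fin m → 𝓧) => φ (w.1 i) (w.2.2 j)) := by
    have hp : Measurable (fun w : (Fin m → 𝓧) × (Fin m → 𝓧) × (Fin m → 𝓧) =>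
        ((w.1 i, w.2.2 j) : 𝓧 × 𝓧)) :=
      ((measurable_pi_apply i).comp measurable_fst).prodMk
        ((measurable_pi_apply j).comp (measurable_snd.comp measurable_snd))
    exact hφ.comp hp
  rw [integral_prod _ (integrable_of_bdd hmeas (C := C) (fun w => hC _ _))]
  have hinner : ∀ a : Fin m → 𝓧,
      ∫ z, φ (a i) (z.2 j)
          ∂((Measure.pi (fun _ : Fin m => μ2)).prod (Measure.pi (fun _ : Fin m => μ3)))
        = (fun u => ∫ v, φ u v ∂μ3) (a i) := by
    intro a
    have h2 : Measurable (fun c : Fin m → 𝓧 => φ (a i) (c j)) :=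
      by
        have hp : Measurable (fun c : Fin m → 𝓧 => ((a i, c j) : 𝓧 × 𝓧)) :=
          measurable_const.prodMk (measurable_pi_apply j)
        exact hφ.comp hp
    have h3 := int_snd (Measure.pi (fun _ : Fin m => μ2)) (Measure.pi (fun _ : Fin m => μ3))
      (fun c : Fin m → 𝓧 => φ (a i) (c j)) h2 (M := C) (fun c => hC _ _)
    rw [h3]
    exact int_eval _ j (φ (a i)) (by
        have hp : Measurable (fun y : 𝓧 => ((a i, y) : 𝓧 × 𝓧)) :=
          measurable_const.prodMk measurable_id
        exact hφ.comp hp)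
  rw [integral_congr_ae (Filter.Eventually.of_forall hinner)]
  exact int_eval _ i _ hG

lemma intW_12 (hφ : Measurable (Function.uncurry φ)) (hC : ∀ x y, |φ x y| ≤ C) (i j : Fin m) :
    ∫ w, φ (w.1 i) (w.2.1 j) ∂((Measure.pi (fun _ : Fin m => μ1)).prod
      ((Measure.pi (fun _ : Fin m => μ2)).prod (Measure.pi (fun _ : Fin m => μ3))))
      = ∫ u, ∫ v, φ u v ∂μ2 ∂μ1 := by
  have hG : Measurable (fun u => ∫ v, φ u v ∂μ2) :=
    hφ.stronglyMeasurable.integral_prod_right'.measurable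
  have hmeas : Measurable
      (fun w : (Fin m → 𝓧) × (Fin m → 𝓧) × (Fin m → 𝓧) => φ (w.1 i) (w.2.1 j)) := by
    have hp : Measurable (fun w : (Fin m → 𝓧) × (Fin m → 𝓧) × (Fin m → 𝓧) =>
        ((w.1 i, w.2.1 j) : 𝓧 × 𝓧)) :=
      ((measurable_pi_apply i).comp measurable_fst).prodMk
        ((measurable_pi_apply j).comp (measurable_fst.comp measurable_snd))
    exact hφ.comp hp
  rw [integral_prod _ (integrable_of_bdd hmeas (C := C) (fun w => hC _ _))]
  have hinner : ∀ a : Fin m → 𝓧,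
      ∫ z, φ (a i) (z.1 j)
          ∂((Measure.pi (fun _ : Fin m => μ2)).prod (Measure.pi (fun _ : Fin m => μ3)))
        = (fun u => ∫ v, φ u v ∂μ2) (a i) := by
    intro a
    have h2 : Measurable (fun c : Fin m → 𝓧 => φ (a i) (c j)) :=
      by
        have hp : Measurable (fun c : Fin m → 𝓧 => ((a i, c j) : 𝓧 × 𝓧)) :=
          measurable_const.prodMk (measurable_pi_apply j)
        exact hφ.comp hp
    have h3 := int_fst (Measure.pi (fun _ : Fin m => μ2)) (Measure.pi (fun _ : Fin m => μ3))
      (fun c : Fin m → 𝓧 => φ (a i) (c j)) h2 (M := C) (fun c => hC _ _)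
    rw [h3]
    exact int_eval _ j (φ (a i)) (by
        have hp : Measurable (fun y : 𝓧 => ((a i, y) : 𝓧 × 𝓧)) :=
          measurable_const.prodMk measurable_id
        exact hφ.comp hp)
  rw [integral_congr_ae (Filter.Eventually.of_forall hinner)]
  exact int_eval _ i _ hG

end IntW

section Fd
variable {𝓧 : Type*} {κ : 𝓧 → 𝓧 → ℝ} {K : ℝ} {m : ℕ}

lemma Fd_eq (x b c : Fin m → 𝓧) :
    mmdU κ x c - mmdU κ x b
      = (1/((m:ℝ)*((m:ℝ)-1))) * S2 κ c - (1/((m:ℝ)*((m:ℝ)-1))) * S2 κ b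
        - (2/((m:ℝ)*(m:ℝ))) * S3 κ x c + (2/((m:ℝ)*(m:ℝ))) * S3 κ x b := by
  simp only [mmdU, S2, S3, Fintype.card_fin]
  ring

lemma mfacts (hm : 2 ≤ m) : (0:ℝ) < m ∧ (1:ℝ) ≤ (m:ℝ) - 1 := by
  have h1 : (2:ℝ) ≤ m := by exact_mod_cast hm
  constructor <;> linarith

lemma abs_sub_le' (a b : ℝ) : |a - b| ≤ |a| + |b| := by
  rw [sub_eq_add_neg]
  refine (abs_add_le _ _).trans ?_
  rw [abs_neg]

lemma Fd_bound (hb : ∀ x y, 0 ≤ κ x y ∧ κ x y ≤ K) (hm : 2 ≤ m) (hK : 0 ≤ K)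
    (x b c : Fin m → 𝓧) :
    |mmdU κ x c - mmdU κ x b| ≤ 8 * K := by
  obtain ⟨hm0, hm1⟩ := mfacts (m := m) hm
  rw [Fd_eq]
  set α := 1/((m:ℝ)*((m:ℝ)-1)) with hα
  set β := 2/((m:ℝ)*(m:ℝ)) with hβ
  have hα0 : 0 ≤ α := by positivity
  have hβ0 : 0 ≤ β := by positivity
  have hαb : α * (m * (m * K)) ≤ 2 * K := by
    rw [hα, div_mul_eq_mul_div, one_mul, div_le_iff₀ (by nlinarith)]
    nlinarith [mul_nonneg (mul_nonneg hK hm0.le) (by linarith : (0:ℝ) ≤ (m:ℝ) - 2)]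
  have hβb : β * (m * (m * K)) = 2 * K := by
    rw [hβ]
    field_simp
  have h1 := S2_bound hb c hK
  have h2 := S2_bound hb b hK
  have h3 := S3_bound hb x c
  have h4 := S3_bound hb x b
  have habs : |α * S2 κ c - α * S2 κ b - β * S3 κ x c + β * S3 κ x b|
      ≤ |α * S2 κ c| + |α * S2 κ b| + |β * S3 κ x c| + |β * S3 κ x b| := by
    calc |α * S2 κ c - α * S2 κ b - β * S3 κ x c + β * S3 κ x b|
        ≤ |α * S2 κ c - α * S2 κ b - β * S3 κ x c| + |β * S3 κ x b| := abs_add_le _ _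
      _ ≤ |α * S2 κ c - α * S2 κ b| + |β * S3 κ x c| + |β * S3 κ x b| := by
          linarith [abs_sub_le' (α * S2 κ c - α * S2 κ b) (β * S3 κ x c)]
      _ ≤ |α * S2 κ c| + |α * S2 κ b| + |β * S3 κ x c| + |β * S3 κ x b| := by
          linarith [abs_sub_le' (α * S2 κ c) (α * S2 κ b)]
  refine habs.trans ?_
  rw [abs_mul, abs_mul, abs_mul, abs_mul, abs_of_nonneg hα0, abs_of_nonneg hβ0]
  nlinarith [mul_le_mul_of_nonneg_left h1 hα0, mul_le_mul_of_nonneg_left h2 hα0,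
    mul_le_mul_of_nonneg_left h3 hβ0, mul_le_mul_of_nonneg_left h4 hβ0]

lemma Fd_diff_x (hb : ∀ x y, 0 ≤ κ x y ∧ κ x y ≤ K) (hm : 2 ≤ m) (hK : 0 ≤ K)
    (x b c : Fin m → 𝓧) (i : Fin m) (v : 𝓧) :
    |(mmdU κ (Function.update x i v) c - mmdU κ (Function.update x i v) b)
      - (mmdU κ x c - mmdU κ x b)| ≤ 4 * K / m := by
  obtain ⟨hm0, hm1⟩ := mfacts (m := m) hm
  rw [Fd_eq, Fd_eq]
  set β := 2/((m:ℝ)*(m:ℝ)) with hβ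
  have hβ0 : 0 ≤ β := by positivity
  have heq : (1/((m:ℝ)*((m:ℝ)-1))) * S2 κ c - (1/((m:ℝ)*((m:ℝ)-1))) * S2 κ b
        - β * S3 κ (Function.update x i v) c + β * S3 κ (Function.update x i v) b
      - ((1/((m:ℝ)*((m:ℝ)-1))) * S2 κ c - (1/((m:ℝ)*((m:ℝ)-1))) * S2 κ b
        - β * S3 κ x c + β * S3 κ x b)
      = β * (S3 κ (Function.update x i v) b - S3 κ x b)
        - β * (S3 κ (Function.update x i v) c - S3 κ x c) := by ring
  rw [heq]
  have h1 := S3_diff_left hb x b i v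
  have h2 := S3_diff_left hb x c i v
  have hβm : β * ((m:ℝ) * K) = 2 * K / m := by
    rw [hβ]; field_simp
  calc |β * (S3 κ (Function.update x i v) b - S3 κ x b)
        - β * (S3 κ (Function.update x i v) c - S3 κ x c)|
      ≤ |β * (S3 κ (Function.update x i v) b - S3 κ x b)|
        + |β * (S3 κ (Function.update x i v) c - S3 κ x c)| := abs_sub_le' _ _
    _ = β * |S3 κ (Function.update x i v) b - S3 κ x b|
        + β * |S3 κ (Function.update x i v) c - S3 κ x c| := by
        rw [abs_mul, abs_mul, abs_of_nonneg hβ0]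
    _ ≤ β * ((m:ℝ) * K) + β * ((m:ℝ) * K) := by
        have := mul_le_mul_of_nonneg_left h1 hβ0
        have := mul_le_mul_of_nonneg_left h2 hβ0
        linarith
    _ = 4 * K / m := by rw [hβm]; ring

lemma Fd_diff_b (hb : ∀ x y, 0 ≤ κ x y ∧ κ x y ≤ K) (hm : 2 ≤ m) (hK : 0 ≤ K)
    (x b c : Fin m → 𝓧) (i : Fin m) (v : 𝓧) :
    |(mmdU κ x c - mmdU κ x (Function.update b i v))
      - (mmdU κ x c - mmdU κ x b)| ≤ 4 * K / m := by
  obtain ⟨hm0, hm1⟩ := mfacts (m := m) hm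
  rw [Fd_eq, Fd_eq]
  set α := 1/((m:ℝ)*((m:ℝ)-1)) with hα
  set β := 2/((m:ℝ)*(m:ℝ)) with hβ
  have hα0 : 0 ≤ α := by positivity
  have hβ0 : 0 ≤ β := by positivity
  have heq : α * S2 κ c - α * S2 κ (Function.update b i v)
        - β * S3 κ x c + β * S3 κ x (Function.update b i v)
      - (α * S2 κ c - α * S2 κ b - β * S3 κ x c + β * S3 κ x b)
      = β * (S3 κ x (Function.update b i v) - S3 κ x b)
        - α * (S2 κ (Function.update b i v) - S2 κ b) := by ring
  rw [heq]
  have h1 := S3_diff_right hb x b i v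
  have h2 := S2_diff hb b i v hK
  have hβm : β * ((m:ℝ) * K) = 2 * K / m := by rw [hβ]; field_simp
  have hαm : α * (2 * ((m:ℝ) - 1) * K) = 2 * K / m := by
    rw [hα]; field_simp
  calc |β * (S3 κ x (Function.update b i v) - S3 κ x b)
        - α * (S2 κ (Function.update b i v) - S2 κ b)|
      ≤ |β * (S3 κ x (Function.update b i v) - S3 κ x b)|
        + |α * (S2 κ (Function.update b i v) - S2 κ b)| := abs_sub_le' _ _
    _ = β * |S3 κ x (Function.update b i v) - S3 κ x b|
        + α * |S2 κ (Function.update b i v) - S2 κ b| := by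
        rw [abs_mul, abs_mul, abs_of_nonneg hβ0, abs_of_nonneg hα0]
    _ ≤ β * ((m:ℝ) * K) + α * (2 * ((m:ℝ) - 1) * K) := by
        have := mul_le_mul_of_nonneg_left h1 hβ0
        have := mul_le_mul_of_nonneg_left h2 hα0
        linarith
    _ = 4 * K / m := by rw [hβm, hαm]; ring

lemma Fd_diff_c (hb : ∀ x y, 0 ≤ κ x y ∧ κ x y ≤ K) (hm : 2 ≤ m) (hK : 0 ≤ K)
    (x b c : Fin m → 𝓧) (i : Fin m) (v : 𝓧) :
    |(mmdU κ x (Function.update c i v) - mmdU κ x b)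
      - (mmdU κ x c - mmdU κ x b)| ≤ 4 * K / m := by
  obtain ⟨hm0, hm1⟩ := mfacts (m := m) hm
  rw [Fd_eq, Fd_eq]
  set α := 1/((m:ℝ)*((m:ℝ)-1)) with hα
  set β := 2/((m:ℝ)*(m:ℝ)) with hβ
  have hα0 : 0 ≤ α := by positivity
  have hβ0 : 0 ≤ β := by positivity
  have heq : α * S2 κ (Function.update c i v) - α * S2 κ b
        - β * S3 κ x (Function.update c i v) + β * S3 κ x b
      - (α * S2 κ c - α * S2 κ b - β * S3 κ x c + β * S3 κ x b)
      = α * (S2 κ (Function.update c i v) - S2 κ c)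
        - β * (S3 κ x (Function.update c i v) - S3 κ x c) := by ring
  rw [heq]
  have h1 := S3_diff_right hb x c i v
  have h2 := S2_diff hb c i v hK
  have hβm : β * ((m:ℝ) * K) = 2 * K / m := by rw [hβ]; field_simp
  have hαm : α * (2 * ((m:ℝ) - 1) * K) = 2 * K / m := by
    rw [hα]; field_simp
  calc |α * (S2 κ (Function.update c i v) - S2 κ c)
        - β * (S3 κ x (Function.update c i v) - S3 κ x c)|
      ≤ |α * (S2 κ (Function.update c i v) - S2 κ c)|
        + |β * (S3 κ x (Function.update c i v) - S3 κ x c)| := abs_sub_le' _ _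
    _ = α * |S2 κ (Function.update c i v) - S2 κ c|
        + β * |S3 κ x (Function.update c i v) - S3 κ x c| := by
        rw [abs_mul, abs_mul, abs_of_nonneg hβ0, abs_of_nonneg hα0]
    _ ≤ α * (2 * ((m:ℝ) - 1) * K) + β * ((m:ℝ) * K) := by
        have := mul_le_mul_of_nonneg_left h1 hβ0
        have := mul_le_mul_of_nonneg_left h2 hα0
        linarith
    _ = 4 * K / m := by rw [hβm, hαm]; ring

lemma measurable_S2 [MeasurableSpace 𝓧] (hκ : Measurable (Function.uncurry κ)) :
    Measurable (fun x : Fin m → 𝓧 => S2 κ x) := by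
  apply Finset.measurable_sum
  intro i _
  apply Finset.measurable_sum
  intro j _
  have hp : Measurable (fun x : Fin m → 𝓧 => ((x i, x j) : 𝓧 × 𝓧)) :=
    (measurable_pi_apply i).prodMk (measurable_pi_apply j)
  exact hκ.comp hp

lemma measurable_S3 [MeasurableSpace 𝓧] (hκ : Measurable (Function.uncurry κ)) :
    Measurable (fun z : (Fin m → 𝓧) × (Fin m → 𝓧) => S3 κ z.1 z.2) := by
  apply Finset.measurable_sum
  intro i _
  apply Finset.measurable_sum
  intro j _
  have hp : Measurable (fun z : (Fin m → 𝓧) × (Fin m → 𝓧) => ((z.1 i, z.2 j) : 𝓧 × 𝓧)) :=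
    ((measurable_pi_apply i).comp measurable_fst).prodMk
      ((measurable_pi_apply j).comp measurable_snd)
  exact hκ.comp hp

set_option maxHeartbeats 1000000 in
lemma measurable_Fd [MeasurableSpace 𝓧] (hκ : Measurable (Function.uncurry κ)) :
    Measurable (fun w : (Fin m → 𝓧) × (Fin m → 𝓧) × (Fin m → 𝓧) =>
      mmdU κ w.1 w.2.2 - mmdU κ w.1 w.2.1) := by
  have heq : (fun w : (Fin m → 𝓧) × (Fin m → 𝓧) × (Fin m → 𝓧) =>
      mmdU κ w.1 w.2.2 - mmdU κ w.1 w.2.1)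
      = fun w => (1/((m:ℝ)*((m:ℝ)-1))) * S2 κ w.2.2 - (1/((m:ℝ)*((m:ℝ)-1))) * S2 κ w.2.1
        - (2/((m:ℝ)*(m:ℝ))) * S3 κ w.1 w.2.2 + (2/((m:ℝ)*(m:ℝ))) * S3 κ w.1 w.2.1 :=
    funext fun w => Fd_eq w.1 w.2.1 w.2.2
  rw [heq]
  have h22 : Measurable (fun w : (Fin m → 𝓧) × (Fin m → 𝓧) × (Fin m → 𝓧) => S2 κ w.2.2) :=
    (measurable_S2 hκ).comp (measurable_snd.comp measurable_snd)
  have h21 : Measurable (fun w : (Fin m → 𝓧) × (Fin m → 𝓧) × (Fin m → 𝓧) => S2 κ w.2.1) :=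
    (measurable_S2 hκ).comp (measurable_fst.comp measurable_snd)
  have h313 : Measurable (fun w : (Fin m → 𝓧) × (Fin m → 𝓧) × (Fin m → 𝓧) =>
      S3 κ w.1 w.2.2) :=
    (measurable_S3 hκ).comp (measurable_fst.prodMk (measurable_snd.comp measurable_snd))
  have h312 : Measurable (fun w : (Fin m → 𝓧) × (Fin m → 𝓧) × (Fin m → 𝓧) =>
      S3 κ w.1 w.2.1) :=
    (measurable_S3 hκ).comp (measurable_fst.prodMk (measurable_fst.comp measurable_snd))
  refine Measurable.add (Measurable.sub (Measurable.sub ?_ ?_) ?_) ?_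
  · exact h22.const_mul (1/((m:ℝ)*((m:ℝ)-1)))
  · exact h21.const_mul (1/((m:ℝ)*((m:ℝ)-1)))
  · exact h313.const_mul (2/((m:ℝ)*(m:ℝ)))
  · exact h312.const_mul (2/((m:ℝ)*(m:ℝ)))

end Fd

section Main
variable {𝓧 : Type*} [MeasurableSpace 𝓧] {κ : 𝓧 → 𝓧 → ℝ} {K : ℝ} {m : ℕ}

lemma EFd (hκ : Measurable (Function.uncurry κ)) (hb : ∀ x y, 0 ≤ κ x y ∧ κ x y ≤ K)
    (hK : 0 ≤ K) (p q : Measure 𝓧) [IsProbabilityMeasure p] [IsProbabilityMeasure q]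
    (hm : 2 ≤ m) :
    ∫ w, (mmdU κ w.1 w.2.2 - mmdU κ w.1 w.2.1)
      ∂((Measure.pi (fun _ : Fin m => p)).prod
        ((Measure.pi (fun _ : Fin m => q)).prod (Measure.pi (fun _ : Fin m => p))))
      = -(mmdSq κ p q) := by
  classical
  obtain ⟨hm0, hm1⟩ := mfacts (m := m) hm
  set μW := (Measure.pi (fun _ : Fin m => p)).prod
    ((Measure.pi (fun _ : Fin m => q)).prod (Measure.pi (fun _ : Fin m => p))) with hμW
  have hbK : ∀ x y, |κ x y| ≤ K := fun x y => by
    rw [abs_of_nonneg (hb x y).1]; exact (hb x y).2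
  set α := 1/((m:ℝ)*((m:ℝ)-1)) with hα
  set β := 2/((m:ℝ)*(m:ℝ)) with hβ
  have heq : (fun w : (Fin m → 𝓧) × (Fin m → 𝓧) × (Fin m → 𝓧) =>
      mmdU κ w.1 w.2.2 - mmdU κ w.1 w.2.1)
      = fun w => α * S2 κ w.2.2 - α * S2 κ w.2.1 - β * S3 κ w.1 w.2.2 + β * S3 κ w.1 w.2.1 :=
    funext fun w => Fd_eq w.1 w.2.1 w.2.2
  rw [heq]
  -- measurability of pieces
  have h22 : Measurable (fun w : (Fin m → 𝓧) × (Fin m → 𝓧) × (Fin m → 𝓧) => S2 κ w.2.2) :=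
    (measurable_S2 hκ).comp (measurable_snd.comp measurable_snd)
  have h21 : Measurable (fun w : (Fin m → 𝓧) × (Fin m → 𝓧) × (Fin m → 𝓧) => S2 κ w.2.1) :=
    (measurable_S2 hκ).comp (measurable_fst.comp measurable_snd)
  have h313 : Measurable (fun w : (Fin m → 𝓧) × (Fin m → 𝓧) × (Fin m → 𝓧) =>
      S3 κ w.1 w.2.2) :=
    (measurable_S3 hκ).comp (measurable_fst.prodMk (measurable_snd.comp measurable_snd))
  have h312 : Measurable (fun w : (Fin m → 𝓧) × (Fin m → 𝓧) × (Fin m → 𝓧) =>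
      S3 κ w.1 w.2.1) :=
    (measurable_S3 hκ).comp (measurable_fst.prodMk (measurable_fst.comp measurable_snd))
  have I1 : Integrable (fun w : (Fin m → 𝓧) × (Fin m → 𝓧) × (Fin m → 𝓧) => S2 κ w.2.2) μW :=
    integrable_of_bdd h22 (C := m * (m * K)) (fun w => S2_bound hb _ hK)
  have I2 : Integrable (fun w : (Fin m → 𝓧) × (Fin m → 𝓧) × (Fin m → 𝓧) => S2 κ w.2.1) μW :=
    integrable_of_bdd h21 (C := m * (m * K)) (fun w => S2_bound hb _ hK)
  have I3 : Integrable (fun w : (Fin m → 𝓧) × (Fin m → 𝓧) × (Fin m → 𝓧) =>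
      S3 κ w.1 w.2.2) μW :=
    integrable_of_bdd h313 (C := m * (m * K)) (fun w => S3_bound hb _ _)
  have I4 : Integrable (fun w : (Fin m → 𝓧) × (Fin m → 𝓧) × (Fin m → 𝓧) =>
      S3 κ w.1 w.2.1) μW :=
    integrable_of_bdd h312 (C := m * (m * K)) (fun w => S3_bound hb _ _)
  -- split integral
  have hsplit : ∫ w, (α * S2 κ w.2.2 - α * S2 κ w.2.1 - β * S3 κ w.1 w.2.2
        + β * S3 κ w.1 w.2.1) ∂μW
      = α * (∫ w, S2 κ w.2.2 ∂μW) - α * (∫ w, S2 κ w.2.1 ∂μW)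
        - β * (∫ w, S3 κ w.1 w.2.2 ∂μW) + β * (∫ w, S3 κ w.1 w.2.1 ∂μW) := by
    have e1 : ∫ w, (α * S2 κ w.2.2 - α * S2 κ w.2.1 - β * S3 κ w.1 w.2.2
          + β * S3 κ w.1 w.2.1) ∂μW
        = (∫ w, (α * S2 κ w.2.2 - α * S2 κ w.2.1 - β * S3 κ w.1 w.2.2) ∂μW)
          + ∫ w, β * S3 κ w.1 w.2.1 ∂μW :=
      integral_add (((I1.const_mul α).sub (I2.const_mul α)).sub (I3.const_mul β))
        (I4.const_mul β)
    have e2 : ∫ w, (α * S2 κ w.2.2 - α * S2 κ w.2.1 - β * S3 κ w.1 w.2.2) ∂μW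
        = (∫ w, (α * S2 κ w.2.2 - α * S2 κ w.2.1) ∂μW) - ∫ w, β * S3 κ w.1 w.2.2 ∂μW :=
      integral_sub ((I1.const_mul α).sub (I2.const_mul α)) (I3.const_mul β)
    have e3 : ∫ w, (α * S2 κ w.2.2 - α * S2 κ w.2.1) ∂μW
        = (∫ w, α * S2 κ w.2.2 ∂μW) - ∫ w, α * S2 κ w.2.1 ∂μW :=
      integral_sub (I1.const_mul α) (I2.const_mul α)
    rw [e1, e2, e3, integral_const_mul, integral_const_mul, integral_const_mul,
      integral_const_mul]
  rw [hsplit]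
  -- integrability of κ-pair pieces
  have hterm33 : ∀ (i : Fin m) (j : Fin m), Integrable
      (fun w : (Fin m → 𝓧) × (Fin m → 𝓧) × (Fin m → 𝓧) => κ (w.2.2 i) (w.2.2 j)) μW := by
    intro i j
    have hp : Measurable (fun w : (Fin m → 𝓧) × (Fin m → 𝓧) × (Fin m → 𝓧) =>
        ((w.2.2 i, w.2.2 j) : 𝓧 × 𝓧)) :=
      ((measurable_pi_apply i).comp (measurable_snd.comp measurable_snd)).prodMk
        ((measurable_pi_apply j).comp (measurable_snd.comp measurable_snd))
    exact integrable_of_bdd (hκ.comp hp) (C := K) (fun w => hbK _ _)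
  have hterm21 : ∀ (i : Fin m) (j : Fin m), Integrable
      (fun w : (Fin m → 𝓧) × (Fin m → 𝓧) × (Fin m → 𝓧) => κ (w.2.1 i) (w.2.1 j)) μW := by
    intro i j
    have hp : Measurable (fun w : (Fin m → 𝓧) × (Fin m → 𝓧) × (Fin m → 𝓧) =>
        ((w.2.1 i, w.2.1 j) : 𝓧 × 𝓧)) :=
      ((measurable_pi_apply i).comp (measurable_fst.comp measurable_snd)).prodMk
        ((measurable_pi_apply j).comp (measurable_fst.comp measurable_snd))
    exact integrable_of_bdd (hκ.comp hp) (C := K) (fun w => hbK _ _)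
  have hterm13 : ∀ (i : Fin m) (j : Fin m), Integrable
      (fun w : (Fin m → 𝓧) × (Fin m → 𝓧) × (Fin m → 𝓧) => κ (w.1 i) (w.2.2 j)) μW := by
    intro i j
    have hp : Measurable (fun w : (Fin m → 𝓧) × (Fin m → 𝓧) × (Fin m → 𝓧) =>
        ((w.1 i, w.2.2 j) : 𝓧 × 𝓧)) :=
      ((measurable_pi_apply i).comp measurable_fst).prodMk
        ((measurable_pi_apply j).comp (measurable_snd.comp measurable_snd))
    exact integrable_of_bdd (hκ.comp hp) (C := K) (fun w => hbK _ _)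
  have hterm12 : ∀ (i : Fin m) (j : Fin m), Integrable
      (fun w : (Fin m → 𝓧) × (Fin m → 𝓧) × (Fin m → 𝓧) => κ (w.1 i) (w.2.1 j)) μW := by
    intro i j
    have hp : Measurable (fun w : (Fin m → 𝓧) × (Fin m → 𝓧) × (Fin m → 𝓧) =>
        ((w.1 i, w.2.1 j) : 𝓧 × 𝓧)) :=
      ((measurable_pi_apply i).comp measurable_fst).prodMk
        ((measurable_pi_apply j).comp (measurable_fst.comp measurable_snd))
    exact integrable_of_bdd (hκ.comp hp) (C := K) (fun w => hbK _ _)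
  set Ipp := ∫ x, ∫ x', κ x x' ∂p ∂p with hIpp
  set Ipq := ∫ x, ∫ y, κ x y ∂q ∂p with hIpq
  set Iqq := ∫ y, ∫ y', κ y y' ∂q ∂q with hIqq
  have hcard : ∀ i : Fin m, ((Finset.univ.erase i).card : ℝ) = (m:ℝ) - 1 := by
    intro i
    rw [Finset.card_erase_of_mem (Finset.mem_univ i), Finset.card_univ, Fintype.card_fin]
    have h1 : 1 ≤ m := le_trans one_le_two hm
    push_cast [Nat.cast_sub h1]
    ring
  have J1 : ∫ w, S2 κ w.2.2 ∂μW = ((m:ℝ) * ((m:ℝ) - 1)) * Ipp := by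
    have hfun : (fun w : (Fin m → 𝓧) × (Fin m → 𝓧) × (Fin m → 𝓧) => S2 κ w.2.2)
        = fun w => ∑ i, ∑ j ∈ Finset.univ.erase i, κ (w.2.2 i) (w.2.2 j) := rfl
    rw [hfun, integral_finset_sum _ (fun i _ =>
      integrable_finset_sum _ (fun j _ => hterm33 i j))]
    have : ∀ i ∈ Finset.univ, (∫ w, ∑ j ∈ Finset.univ.erase i,
        κ (w.2.2 i) (w.2.2 j) ∂μW) = ((m:ℝ) - 1) * Ipp := by
      intro i _
      rw [integral_finset_sum _ (fun j _ => hterm33 i j)]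
      have h2 : ∀ j ∈ Finset.univ.erase i,
          (∫ w, κ (w.2.2 i) (w.2.2 j) ∂μW) = Ipp := by
        intro j hj
        exact intW_33 p q p hκ hbK (Finset.ne_of_mem_erase hj).symm
      rw [Finset.sum_congr rfl h2, Finset.sum_const, nsmul_eq_mul, hcard i]
    rw [Finset.sum_congr rfl this, Finset.sum_const, nsmul_eq_mul]
    simp [Finset.card_univ]
    ring
  have J2 : ∫ w, S2 κ w.2.1 ∂μW = ((m:ℝ) * ((m:ℝ) - 1)) * Iqq := by
    have hfun : (fun w : (Fin m → 𝓧) × (Fin m → 𝓧) × (Fin m → 𝓧) => S2 κ w.2.1)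
        = fun w => ∑ i, ∑ j ∈ Finset.univ.erase i, κ (w.2.1 i) (w.2.1 j) := rfl
    rw [hfun, integral_finset_sum _ (fun i _ =>
      integrable_finset_sum _ (fun j _ => hterm21 i j))]
    have : ∀ i ∈ Finset.univ, (∫ w, ∑ j ∈ Finset.univ.erase i,
        κ (w.2.1 i) (w.2.1 j) ∂μW) = ((m:ℝ) - 1) * Iqq := by
      intro i _
      rw [integral_finset_sum _ (fun j _ => hterm21 i j)]
      have h2 : ∀ j ∈ Finset.univ.erase i,
          (∫ w, κ (w.2.1 i) (w.2.1 j) ∂μW) = Iqq := by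
        intro j hj
        exact intW_22 p q p hκ hbK (Finset.ne_of_mem_erase hj).symm
      rw [Finset.sum_congr rfl h2, Finset.sum_const, nsmul_eq_mul, hcard i]
    rw [Finset.sum_congr rfl this, Finset.sum_const, nsmul_eq_mul]
    simp [Finset.card_univ]
    ring
  have J3 : ∫ w, S3 κ w.1 w.2.2 ∂μW = ((m:ℝ) * (m:ℝ)) * Ipp := by
    have hfun : (fun w : (Fin m → 𝓧) × (Fin m → 𝓧) × (Fin m → 𝓧) => S3 κ w.1 w.2.2)
        = fun w => ∑ i, ∑ j, κ (w.1 i) (w.2.2 j) := rfl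
    rw [hfun, integral_finset_sum _ (fun i _ =>
      integrable_finset_sum _ (fun j _ => hterm13 i j))]
    have : ∀ i ∈ Finset.univ, (∫ w, ∑ j, κ (w.1 i) (w.2.2 j) ∂μW) = (m:ℝ) * Ipp := by
      intro i _
      rw [integral_finset_sum _ (fun j _ => hterm13 i j)]
      have h2 : ∀ j ∈ Finset.univ, (∫ w, κ (w.1 i) (w.2.2 j) ∂μW) = Ipp := by
        intro j _
        exact intW_13 p q p hκ hbK i j
      rw [Finset.sum_congr rfl h2, Finset.sum_const, nsmul_eq_mul]
      simp [Finset.card_univ]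
    rw [Finset.sum_congr rfl this, Finset.sum_const, nsmul_eq_mul]
    simp [Finset.card_univ]
    ring
  have J4 : ∫ w, S3 κ w.1 w.2.1 ∂μW = ((m:ℝ) * (m:ℝ)) * Ipq := by
    have hfun : (fun w : (Fin m → 𝓧) × (Fin m → 𝓧) × (Fin m → 𝓧) => S3 κ w.1 w.2.1)
        = fun w => ∑ i, ∑ j, κ (w.1 i) (w.2.1 j) := rfl
    rw [hfun, integral_finset_sum _ (fun i _ =>
      integrable_finset_sum _ (fun j _ => hterm12 i j))]
    have : ∀ i ∈ Finset.univ, (∫ w, ∑ j, κ (w.1 i) (w.2.1 j) ∂μW) = (m:ℝ) * Ipq := by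
      intro i _
      rw [integral_finset_sum _ (fun j _ => hterm12 i j)]
      have h2 : ∀ j ∈ Finset.univ, (∫ w, κ (w.1 i) (w.2.1 j) ∂μW) = Ipq := by
        intro j _
        exact intW_12 p q p hκ hbK i j
      rw [Finset.sum_congr rfl h2, Finset.sum_const, nsmul_eq_mul]
      simp [Finset.card_univ]
    rw [Finset.sum_congr rfl this, Finset.sum_const, nsmul_eq_mul]
    simp [Finset.card_univ]
    ring
  rw [J1, J2, J3, J4]
  have hmmd : mmdSq κ p q = Ipp - 2 * Ipq + Iqq := rfl
  rw [hmmd, hα, hβ]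
  field_simp
  ring
end Main

section Mgf
variable {𝓧 : Type*} [MeasurableSpace 𝓧] {κ : 𝓧 → 𝓧 → ℝ} {K : ℝ} {m : ℕ}

lemma mgf_Fd (hκ : Measurable (Function.uncurry κ)) (hb : ∀ x y, 0 ≤ κ x y ∧ κ x y ≤ K)
    (hK : 0 ≤ K) (p q : Measure 𝓧) [IsProbabilityMeasure p] [IsProbabilityMeasure q]
    (hm : 2 ≤ m) {t : ℝ} (ht : 0 ≤ t) :
    ∫ w, Real.exp (t * (mmdU κ w.1 w.2.2 - mmdU κ w.1 w.2.1))
      ∂((Measure.pi (fun _ : Fin m => p)).prod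
        ((Measure.pi (fun _ : Fin m => q)).prod (Measure.pi (fun _ : Fin m => p))))
      ≤ Real.exp (t * (∫ w, (mmdU κ w.1 w.2.2 - mmdU κ w.1 w.2.1)
          ∂((Measure.pi (fun _ : Fin m => p)).prod
            ((Measure.pi (fun _ : Fin m => q)).prod (Measure.pi (fun _ : Fin m => p)))))
        + 3 * ((m:ℝ) * (t * (4 * K / m))^2) / 8) := by
  classical
  obtain ⟨hm0, hm1⟩ := mfacts (m := m) hm
  set Pp : Measure (Fin m → 𝓧) := Measure.pi (fun _ : Fin m => p) with hPp
  set Pq : Measure (Fin m → 𝓧) := Measure.pi (fun _ : Fin m => q) with hPq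
  set f : (Fin m → 𝓧) × (Fin m → 𝓧) × (Fin m → 𝓧) → ℝ :=
    fun w => t * (mmdU κ w.1 w.2.2 - mmdU κ w.1 w.2.1) with hf
  have hfmeas : Measurable f := (measurable_Fd hκ).const_mul t
  set Mf : ℝ := t * (8 * K) with hMf
  have hfM : ∀ w, |f w| ≤ Mf := by
    intro w
    rw [hf, abs_mul, abs_of_nonneg ht, hMf]
    exact mul_le_mul_of_nonneg_left (Fd_bound hb hm hK _ _ _) ht
  set c0 : ℝ := t * (4 * K / m) with hc0
  have hc00 : 0 ≤ c0 := by
    rw [hc0]; positivity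
  set S1 : ℝ := (m:ℝ) * c0^2 with hS1
  have hS10 : 0 ≤ S1 := by rw [hS1]; positivity
  have hsum : ∑ _i : Fin m, c0^2 = S1 := by
    rw [Finset.sum_const, nsmul_eq_mul, Finset.card_univ, Fintype.card_fin, hS1]
  -- step over the last block
  have step_c : ∀ (a b : Fin m → 𝓧),
      ∫ cc, Real.exp (f (a, (b, cc))) ∂Pp
        ≤ Real.exp ((∫ cc, f (a, (b, cc)) ∂Pp) + S1 / 8) := by
    intro a b
    have h1 := mcdiarmid_pi (fun _ : Fin m => p) (fun _ => inferInstance)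
      (fun cc => f (a, (b, cc)))
      (hfmeas.comp (measurable_prodMk_left.comp measurable_prodMk_left))
      Mf (fun cc => hfM _) (fun _ => c0) ?_
    · rw [hsum] at h1
      exact h1
    · intro x i v
      have h2 := Fd_diff_c hb hm hK a b x i v
      have h3 : f (a, (b, x)) - f (a, (b, Function.update x i v))
          = t * ((mmdU κ a x - mmdU κ a b)
            - (mmdU κ a (Function.update x i v) - mmdU κ a b)) := by
        rw [hf]; ring
      rw [h3, hc0]
      have h4 : (mmdU κ a x - mmdU κ a b)
          - (mmdU κ a (Function.update x i v) - mmdU κ a b) ≤ 4 * K / m := by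
        rw [abs_sub_comm] at h2
        linarith [(abs_le.mp h2).2]
      exact mul_le_mul_of_nonneg_left h4 ht
  -- step over middle+last blocks
  have step_bc : ∀ a : Fin m → 𝓧,
      ∫ z, Real.exp (f (a, z)) ∂(Pq.prod Pp)
        ≤ Real.exp ((∫ z, f (a, z) ∂(Pq.prod Pp)) + (S1 / 8 + S1 / 8)) := by
    intro a
    have hfa : Measurable (fun z : (Fin m → 𝓧) × (Fin m → 𝓧) => f (a, z)) :=
      hfmeas.comp measurable_prodMk_left
    have h1 := prod_exp_step Pq Pp (fun z => f (a, z)) hfa (M := Mf) (fun z => hfM _)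
      (D := S1 / 8) (by positivity) (fun b => step_c a b)
    set g1 : (Fin m → 𝓧) → ℝ := fun b => ∫ cc, f (a, (b, cc)) ∂Pp with hg1
    have hg1meas : Measurable g1 := hfa.stronglyMeasurable.integral_prod_right'.measurable
    have hg1M : ∀ b, |g1 b| ≤ Mf := by
      intro b
      have h2 : ‖∫ cc, f (a, (b, cc)) ∂Pp‖ ≤ Mf * (Pp Set.univ).toReal :=
        norm_integral_le_of_norm_le_const (Filter.Eventually.of_forall fun cc => by
          rw [Real.norm_eq_abs]; exact hfM _)
      simpa using h2
    have hIfab : ∀ b, Integrable (fun cc => f (a, (b, cc))) Pp := fun b =>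
      integrable_of_bdd (hfmeas.comp (measurable_prodMk_left.comp measurable_prodMk_left))
        (C := Mf) (fun cc => hfM _)
    have hg1diff : ∀ (x : Fin m → 𝓧) (i : Fin m) (v : 𝓧),
        g1 x - g1 (Function.update x i v) ≤ c0 := by
      intro x i v
      have hptw : ∀ cc, f (a, (x, cc)) - f (a, (Function.update x i v, cc)) ≤ c0 := by
        intro cc
        have h2 := Fd_diff_b hb hm hK a x cc i v
        have h3 : f (a, (x, cc)) - f (a, (Function.update x i v, cc))
            = t * ((mmdU κ a cc - mmdU κ a x)
              - (mmdU κ a cc - mmdU κ a (Function.update x i v))) := by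
          rw [hf]; ring
        rw [h3, hc0]
        have h4 : (mmdU κ a cc - mmdU κ a x)
            - (mmdU κ a cc - mmdU κ a (Function.update x i v)) ≤ 4 * K / m := by
          rw [abs_sub_comm] at h2
          linarith [(abs_le.mp h2).2]
        exact mul_le_mul_of_nonneg_left h4 ht
      have h5 : g1 x - g1 (Function.update x i v)
          = ∫ cc, (f (a, (x, cc)) - f (a, (Function.update x i v, cc))) ∂Pp := by
        rw [hg1, integral_sub (hIfab x) (hIfab _)]
      rw [h5]
      have h6 := integral_mono ((hIfab x).sub (hIfab _)) (integrable_const c0) hptw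
      simpa using h6
    have h7 := mcdiarmid_pi (fun _ : Fin m => q) (fun _ => inferInstance) g1 hg1meas
      Mf hg1M (fun _ => c0) hg1diff
    rw [hsum] at h7
    have h8 : ∫ b, g1 b ∂Pq = ∫ z, f (a, z) ∂(Pq.prod Pp) := by
      rw [hg1]
      exact (integral_prod _ (integrable_of_bdd hfa (C := Mf) (fun z => hfM _))).symm
    calc ∫ z, Real.exp (f (a, z)) ∂(Pq.prod Pp)
        ≤ Real.exp (S1 / 8) * ∫ b, Real.exp (g1 b) ∂Pq := h1
      _ ≤ Real.exp (S1 / 8) * Real.exp ((∫ b, g1 b ∂Pq) + S1 / 8) :=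
          mul_le_mul_of_nonneg_left h7 (Real.exp_pos _).le
      _ = Real.exp ((∫ z, f (a, z) ∂(Pq.prod Pp)) + (S1 / 8 + S1 / 8)) := by
          rw [← Real.exp_add, h8]
          congr 1
          ring
  -- full product
  have h9 := prod_exp_step Pp (Pq.prod Pp) f hfmeas (M := Mf) hfM
    (D := S1 / 8 + S1 / 8) (by positivity) step_bc
  set G : (Fin m → 𝓧) → ℝ := fun a => ∫ z, f (a, z) ∂(Pq.prod Pp) with hG
  have hGmeas : Measurable G := hfmeas.stronglyMeasurable.integral_prod_right'.measurable
  have hGM : ∀ a, |G a| ≤ Mf := by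
    intro a
    have h2 : ‖∫ z, f (a, z) ∂(Pq.prod Pp)‖ ≤ Mf * ((Pq.prod Pp) Set.univ).toReal :=
      norm_integral_le_of_norm_le_const (Filter.Eventually.of_forall fun z => by
        rw [Real.norm_eq_abs]; exact hfM _)
    simpa using h2
  have hIfa : ∀ a, Integrable (fun z => f (a, z)) (Pq.prod Pp) := fun a =>
    integrable_of_bdd (hfmeas.comp measurable_prodMk_left) (C := Mf) (fun z => hfM _)
  have hGdiff : ∀ (x : Fin m → 𝓧) (i : Fin m) (v : 𝓧),
      G x - G (Function.update x i v) ≤ c0 := by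
    intro x i v
    have hptw : ∀ z, f (x, z) - f (Function.update x i v, z) ≤ c0 := by
      intro z
      have h2 := Fd_diff_x hb hm hK x z.1 z.2 i v
      have h3 : f (x, z) - f (Function.update x i v, z)
          = t * ((mmdU κ x z.2 - mmdU κ x z.1)
            - (mmdU κ (Function.update x i v) z.2 - mmdU κ (Function.update x i v) z.1)) := by
        rw [hf]; ring
      rw [h3, hc0]
      have h4 : (mmdU κ x z.2 - mmdU κ x z.1)
          - (mmdU κ (Function.update x i v) z.2 - mmdU κ (Function.update x i v) z.1)
          ≤ 4 * K / m := by
        rw [abs_sub_comm] at h2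
        linarith [(abs_le.mp h2).2]
      exact mul_le_mul_of_nonneg_left h4 ht
    have h5 : G x - G (Function.update x i v)
        = ∫ z, (f (x, z) - f (Function.update x i v, z)) ∂(Pq.prod Pp) := by
      rw [hG, integral_sub (hIfa x) (hIfa _)]
    rw [h5]
    have h6 := integral_mono ((hIfa x).sub (hIfa _)) (integrable_const c0) hptw
    simpa using h6
  have h10 := mcdiarmid_pi (fun _ : Fin m => p) (fun _ => inferInstance) G hGmeas
    Mf hGM (fun _ => c0) hGdiff
  rw [hsum] at h10
  have h11 : ∫ a, G a ∂Pp = ∫ w, f w ∂(Pp.prod (Pq.prod Pp)) := by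
    rw [hG]
    exact (integral_prod _ (integrable_of_bdd hfmeas (C := Mf) hfM)).symm
  have h12 : ∫ w, f w ∂(Pp.prod (Pq.prod Pp))
      = t * ∫ w, (mmdU κ w.1 w.2.2 - mmdU κ w.1 w.2.1) ∂(Pp.prod (Pq.prod Pp)) := by
    rw [hf, integral_const_mul]
  calc ∫ w, Real.exp (f w) ∂(Pp.prod (Pq.prod Pp))
      ≤ Real.exp (S1 / 8 + S1 / 8) * ∫ a, Real.exp (G a) ∂Pp := h9
    _ ≤ Real.exp (S1 / 8 + S1 / 8) * Real.exp ((∫ a, G a ∂Pp) + S1 / 8) :=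
        mul_le_mul_of_nonneg_left h10 (Real.exp_pos _).le
    _ = Real.exp ((∫ w, f w ∂(Pp.prod (Pq.prod Pp))) + 3 * (S1 / 8)) := by
        rw [← Real.exp_add, h11]
        congr 1
        ring
    _ = Real.exp (t * (∫ w, (mmdU κ w.1 w.2.2 - mmdU κ w.1 w.2.1) ∂(Pp.prod (Pq.prod Pp)))
        + 3 * ((m:ℝ) * (t * (4 * K / m))^2) / 8) := by
        rw [h12]
        congr 1
        rw [hS1, hc0]
        ring

end Mgf

/-- Pairwise comparison concentration bound (with reference sequence). -/
theorem pairwise_comparison_concentration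
    {𝓧 : Type*} [MeasurableSpace 𝓧]
    (κ : 𝓧 → 𝓧 → ℝ) (K : ℝ)
    (hκ : Measurable (Function.uncurry κ)) (hb : ∀ x y, 0 ≤ κ x y ∧ κ x y ≤ K)
    (p q : Measure 𝓧) [IsProbabilityMeasure p] [IsProbabilityMeasure q]
    (hpq : 0 < mmdSq κ p q)
    {m : ℕ} (hm : 2 ≤ m)
    {Ω : Type*} [MeasurableSpace Ω] (P : Measure Ω) [IsProbabilityMeasure P]
    (X Y₁ Yk : Ω → Fin m → 𝓧)
    (hX : Measurable X) (hY₁ : Measurable Y₁) (hYk : Measurable Yk)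
    (hlaw : Measure.map (fun ω => (X ω, Y₁ ω, Yk ω)) P
      = (Measure.pi fun _ : Fin m => p).prod
          ((Measure.pi fun _ : Fin m => q).prod (Measure.pi fun _ : Fin m => p))) :
    P {ω | mmdU κ (X ω) (Yk ω) > mmdU κ (X ω) (Y₁ ω)}
      ≤ ENNReal.ofReal (Real.exp (-(m : ℝ) * (mmdSq κ p q) ^ 2 / (24 * K ^ 2))) := by
  classical
  obtain ⟨hm0, hm1⟩ := mfacts (m := m) hm
  have hNE : Nonempty 𝓧 := by
    by_contra h
    rw [not_nonempty_iff] at h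
    have h1 := measure_univ (μ := p)
    rw [Set.univ_eq_empty_iff.mpr h] at h1
    simp at h1
  obtain ⟨x₀⟩ := hNE
  have hK : 0 ≤ K := hK0 hb x₀
  have hKpos : 0 < K := by
    rcases lt_or_eq_of_le hK with h | h
    · exact h
    · exfalso
      have hzero : ∀ x y, κ x y = 0 := fun x y =>
        le_antisymm (h ▸ (hb x y).2) (hb x y).1
      have hz : mmdSq κ p q = 0 := by
        simp [mmdSq, hzero]
      rw [hz] at hpq
      exact lt_irrefl 0 hpq
  set M2 := mmdSq κ p q with hM2
  set Pp : Measure (Fin m → 𝓧) := Measure.pi (fun _ : Fin m => p) with hPp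
  set Pq : Measure (Fin m → 𝓧) := Measure.pi (fun _ : Fin m => q) with hPq
  set μW := Pp.prod (Pq.prod Pp) with hμW
  set Fd : (Fin m → 𝓧) × (Fin m → 𝓧) × (Fin m → 𝓧) → ℝ :=
    fun w => mmdU κ w.1 w.2.2 - mmdU κ w.1 w.2.1 with hFd
  have hFdmeas : Measurable Fd := measurable_Fd hκ
  have hsetm : MeasurableSet {w : (Fin m → 𝓧) × (Fin m → 𝓧) × (Fin m → 𝓧) | 0 < Fd w} :=
    measurableSet_lt measurable_const hFdmeas
  have hev : {ω | mmdU κ (X ω) (Yk ω) > mmdU κ (X ω) (Y₁ ω)}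
      = (fun ω => (X ω, Y₁ ω, Yk ω)) ⁻¹' {w | 0 < Fd w} := by
    ext ω
    simp only [Set.mem_setOf_eq, Set.mem_preimage, hFd, gt_iff_lt, sub_pos]
  have hPev : P {ω | mmdU κ (X ω) (Yk ω) > mmdU κ (X ω) (Y₁ ω)} = μW {w | 0 < Fd w} := by
    rw [hev, ← Measure.map_apply (hX.prodMk (hY₁.prodMk hYk)) hsetm, hlaw]
  have hEF : ∫ w, Fd w ∂μW = -M2 := EFd hκ hb hK p q hm
  set t := (m:ℝ) * M2 / (12 * K^2) with htdef
  have ht0 : 0 < t := by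
    rw [htdef]
    apply div_pos (mul_pos hm0 hpq)
    positivity
  have Hmgf : ∫ w, Real.exp (t * Fd w) ∂μW
      ≤ Real.exp (-(m:ℝ) * M2^2 / (24 * K^2)) := by
    have h1 := mgf_Fd hκ hb hK p q hm ht0.le
    rw [show (∫ w, (mmdU κ w.1 w.2.2 - mmdU κ w.1 w.2.1) ∂μW) = -M2 from hEF] at h1
    have harr : t * (-M2) + 3 * ((m:ℝ) * (t * (4 * K / m))^2) / 8
        = -(m:ℝ) * M2^2 / (24 * K^2) := by
      rw [htdef]
      field_simp
      ring
    rw [harr] at h1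
    exact h1
  have hIexp : Integrable (fun w => Real.exp (t * Fd w)) μW := by
    apply integrable_of_bdd (hFdmeas.const_mul t).exp (C := Real.exp (t * (8 * K)))
    intro w
    rw [abs_of_nonneg (Real.exp_pos _).le]
    apply Real.exp_le_exp.mpr
    exact mul_le_mul_of_nonneg_left
      (le_trans (le_abs_self _) (Fd_bound hb hm hK _ _ _)) ht0.le
  have hch := measure_ge_le_exp_mul_mgf (X := Fd) (μ := μW) (t := t) 0 ht0.le hIexp
  have hmgf_eq : mgf Fd μW t = ∫ w, Real.exp (t * Fd w) ∂μW := rfl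
  rw [hmgf_eq] at hch
  simp only [mul_zero, neg_zero, Real.exp_zero, one_mul] at hch
  have hfinal : (μW {w | 0 ≤ Fd w}).toReal ≤ Real.exp (-(m:ℝ) * M2^2 / (24 * K^2)) :=
    le_trans hch Hmgf
  calc P {ω | mmdU κ (X ω) (Yk ω) > mmdU κ (X ω) (Y₁ ω)}
      = μW {w | 0 < Fd w} := hPev
    _ ≤ μW {w | 0 ≤ Fd w} := measure_mono (fun w hw => le_of_lt (Set.mem_setOf_eq ▸ hw))
    _ = ENNReal.ofReal ((μW {w | 0 ≤ Fd w}).toReal) :=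
        (ENNReal.ofReal_toReal (measure_ne_top _ _)).symm
    _ ≤ ENNReal.ofReal (Real.exp (-(m : ℝ) * (mmdSq κ p q) ^ 2 / (24 * K ^ 2))) := by
        rw [← hM2]
        exact ENNReal.ofReal_le_ofReal hfinal
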